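/- (Freudenthal's Spectral Theorem.) Let R be a Riesz space with a strong unit u that has the principal projection property. Then for every v ∈ R and every real ε > 0 there exist finitely many components χ₁, …, χ_k of u and real numbers λ₁, …, λ_k such that |v − (λ₁•χ₁ + ⋯ + λ_k•χ_k)| ≤ ε•u; consequently every v ∈ R is the uniform limit, in the norm ‖w‖_u = inf{λ ∈ ℝ : λ ≥ 0 and λ•u ≥ |w|}, of a sequence of real linear combinations of components of u. -/

import Mathlib

/-- The absolute value `|v| = (v ⊔ 0) + ((-v) ⊔ 0)` (equal to `v ⊔ -v` in a vector lattice). -/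
def absl {R : Type*} [Lattice R] [AddCommGroup R] (v : R) : R :=
  (v ⊔ 0) + (-v ⊔ 0)

/-- The polar `T^⊥ = {x : |x| ⊓ |t| = 0 for all t ∈ T}`. -/
def polar {R : Type*} [Lattice R] [AddCommGroup R] (T : Set R) : Set R :=
  {x : R | ∀ t ∈ T, absl x ⊓ absl t = 0}

/-- A component of `u`: an element `χ` with `χ ⊓ (u - χ) = 0` and `χ ⊔ (u - χ) = u`. -/
def IsComponent {R : Type*} [Lattice R] [AddCommGroup R] (u χ : R) : Prop :=
  χ ⊓ (u - χ) = 0 ∧ χ ⊔ (u - χ) = u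

/-- An ideal of a Riesz space: an order-convex sublattice subspace. -/
structure IsRieszIdeal {R : Type*} [Lattice R] [AddCommGroup R] [Module ℝ R]
    (I : Set R) : Prop where
  zero_mem : (0 : R) ∈ I
  add_mem : ∀ ⦃a b : R⦄, a ∈ I → b ∈ I → a + b ∈ I
  smul_mem : ∀ (c : ℝ) ⦃a : R⦄, a ∈ I → c • a ∈ I
  sup_mem : ∀ ⦃a b : R⦄, a ∈ I → b ∈ I → a ⊔ b ∈ I
  inf_mem : ∀ ⦃a b : R⦄, a ∈ I → b ∈ I → a ⊓ b ∈ I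
  convex : ∀ ⦃a b c : R⦄, a ∈ I → c ∈ I → a ≤ b → b ≤ c → b ∈ I

/-- A band: an ideal closed under all suprema that exist in `R`. -/
structure IsBand {R : Type*} [Lattice R] [AddCommGroup R] [Module ℝ R]
    (I : Set R) : Prop where
  ideal : IsRieszIdeal I
  sup_closed : ∀ S : Set R, S ⊆ I → ∀ a : R, IsLUB S a → a ∈ I

/-- The principal band generated by `x`: the smallest band containing `x`. -/
def principalBand {R : Type*} [Lattice R] [AddCommGroup R] [Module ℝ R] (x : R) : Set R :=
  ⋂₀ {I : Set R | IsBand I ∧ x ∈ I}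

/-- A projection band: every element of the space splits as a sum of an element
of `B` and an element of `B^⊥`. -/
def IsProjectionBand {R : Type*} [Lattice R] [AddCommGroup R] [Module ℝ R]
    (B : Set R) : Prop :=
  ∀ v : R, ∃ a ∈ B, ∃ b ∈ polar B, v = a + b

namespace Freud

set_option linter.unusedSectionVars false

variable {R : Type*} [Lattice R] [AddCommGroup R] [Module ℝ R]
  [CovariantClass R R (· + ·) (· ≤ ·)] [PosSMulMono ℝ R]

lemma neg_le_neg' {a b : R} (h : a ≤ b) : -b ≤ -a := by
  calc -b = a + (-a - b) := by abel
  _ ≤ b + (-a - b) := add_le_add_left h _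
  _ = -a := by abel

lemma absl_eq (a : R) : absl a = |a| := posPart_add_negPart a

lemma smul_le_smul_c {r s : ℝ} {x : R} (h : r ≤ s) (hx : 0 ≤ x) : r • x ≤ s • x := by
  have h0 : 0 ≤ (s - r) • x := smul_nonneg (by linarith) hx
  rw [sub_smul, sub_nonneg] at h0; exact h0

lemma inf_add_le_of_nonneg {a b d : R} (ha : 0 ≤ a) (hb : 0 ≤ b) (hd : 0 ≤ d) :
    (a + b) ⊓ d ≤ a ⊓ d + b ⊓ d := by
  have h1 : (a + b) ⊓ d ≤ (a ⊓ d) + b := by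
    calc (a + b) ⊓ d ≤ (a + b) ⊓ (d + b) := inf_le_inf_left _ (le_add_of_nonneg_right hb)
    _ = a ⊓ d + b := (inf_add a d b).symm
  have h2 : (a + b) ⊓ d ≤ (a ⊓ d) + d :=
    le_trans inf_le_right (le_add_of_nonneg_left (le_inf ha hd))
  calc (a + b) ⊓ d ≤ ((a ⊓ d) + b) ⊓ ((a ⊓ d) + d) := le_inf h1 h2
  _ = (a ⊓ d) + b ⊓ d := (add_inf b d (a ⊓ d)).symm

lemma inf_zero_add {a b d : R} (ha : 0 ≤ a) (hb : 0 ≤ b) (hd : 0 ≤ d)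
    (h1 : a ⊓ d = 0) (h2 : b ⊓ d = 0) : (a + b) ⊓ d = 0 :=
  le_antisymm (by
    calc (a + b) ⊓ d ≤ a ⊓ d + b ⊓ d := inf_add_le_of_nonneg ha hb hd
    _ = 0 := by rw [h1, h2, add_zero]) (le_inf (add_nonneg ha hb) hd)

lemma inf_zero_mono {a b d : R} (hb : 0 ≤ b) (hba : b ≤ a) (hd : 0 ≤ d)
    (h : a ⊓ d = 0) : b ⊓ d = 0 :=
  le_antisymm (h ▸ inf_le_inf_right d hba) (le_inf hb hd)

lemma inf_zero_nsmul {a d : R} (ha : 0 ≤ a) (hd : 0 ≤ d) (h : a ⊓ d = 0) (n : ℕ) :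
    ((n : ℝ) • a) ⊓ d = 0 := by
  induction n with
  | zero => rw [Nat.cast_zero, zero_smul]; exact inf_eq_left.mpr hd
  | succ n ih =>
      rw [Nat.cast_succ, add_smul, one_smul]
      exact inf_zero_add (smul_nonneg n.cast_nonneg ha) ha hd ih h

lemma abs_smul_le' (r : ℝ) (x : R) : |r • x| ≤ |r| • |x| := by
  have key : ∀ s : ℝ, 0 ≤ s → ∀ y : R, |s • y| ≤ s • |y| := by
    intro s hs y
    refine sup_le (smul_le_smul_of_nonneg_left (le_abs_self y) hs) ?_
    rw [← smul_neg]
    exact smul_le_smul_of_nonneg_left (neg_le_abs y) hs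
  rcases le_total 0 r with h | h
  · rw [abs_of_nonneg h]; exact key r h x
  · have : r • x = (-r) • (-x) := by rw [neg_smul, smul_neg, neg_neg]
    rw [this, abs_of_nonpos h]
    exact le_trans (key (-r) (by linarith) (-x)) (le_of_eq (by rw [abs_neg]))

lemma mem_polar_of_abs_le {T : Set R} {y b : R} (h : |y| ≤ b)
    (hdisj : ∀ t ∈ T, b ⊓ |t| = 0) : y ∈ polar T := fun t ht => by
  rw [absl_eq, absl_eq]
  exact inf_zero_mono (abs_nonneg y) h (abs_nonneg t) (hdisj t ht)

lemma polar_abs_disj {T : Set R} {y : R} (hy : y ∈ polar T) {t : R} (ht : t ∈ T) :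
    |y| ⊓ |t| = 0 := by
  have := hy t ht; rwa [absl_eq, absl_eq] at this

lemma zero_mem_polar (T : Set R) : (0 : R) ∈ polar T :=
  mem_polar_of_abs_le (le_of_eq abs_zero) (fun t _ => inf_eq_left.mpr (abs_nonneg t))

lemma isBand_polar (T : Set R) : IsBand (polar T) := by
  constructor
  · constructor
    · exact zero_mem_polar T
    · intro a b ha hb
      refine mem_polar_of_abs_le (abs_add_le a b) (fun t ht => ?_)
      exact inf_zero_add (abs_nonneg a) (abs_nonneg b) (abs_nonneg t)
        (polar_abs_disj ha ht) (polar_abs_disj hb ht)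
    · intro c a ha
      obtain ⟨n, hn⟩ := exists_nat_ge |c|
      refine mem_polar_of_abs_le
        (le_trans (abs_smul_le' c a) (smul_le_smul_c hn (abs_nonneg a))) (fun t ht => ?_)
      exact inf_zero_nsmul (abs_nonneg a) (abs_nonneg t) (polar_abs_disj ha ht) n
    · intro a b ha hb
      have habs : |a ⊔ b| ≤ |a| + |b| := by
        refine sup_le (sup_le ?_ ?_) ?_
        · exact le_trans (le_abs_self a) (le_add_of_nonneg_right (abs_nonneg b))
        · exact le_trans (le_abs_self b) (le_add_of_nonneg_left (abs_nonneg a))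
        · rw [neg_sup]
          exact le_trans inf_le_left
            (le_trans (neg_le_abs a) (le_add_of_nonneg_right (abs_nonneg b)))
      refine mem_polar_of_abs_le habs (fun t ht => ?_)
      exact inf_zero_add (abs_nonneg a) (abs_nonneg b) (abs_nonneg t)
        (polar_abs_disj ha ht) (polar_abs_disj hb ht)
    · intro a b ha hb
      have habs : |a ⊓ b| ≤ |a| + |b| := by
        refine sup_le ?_ ?_
        · exact le_trans inf_le_left
            (le_trans (le_abs_self a) (le_add_of_nonneg_right (abs_nonneg b)))
        · rw [neg_inf]
          refine sup_le ?_ ?_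
          · exact le_trans (neg_le_abs a) (le_add_of_nonneg_right (abs_nonneg b))
          · exact le_trans (neg_le_abs b) (le_add_of_nonneg_left (abs_nonneg a))
      refine mem_polar_of_abs_le habs (fun t ht => ?_)
      exact inf_zero_add (abs_nonneg a) (abs_nonneg b) (abs_nonneg t)
        (polar_abs_disj ha ht) (polar_abs_disj hb ht)
    · intro a b c ha hc hab hbc
      have habs : |b| ≤ |a| + |c| := by
        refine sup_le ?_ ?_
        · exact le_trans hbc (le_trans (le_abs_self c) (le_add_of_nonneg_left (abs_nonneg a)))
        · exact le_trans (neg_le_neg' hab)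
            (le_trans (neg_le_abs a) (le_add_of_nonneg_right (abs_nonneg c)))
      refine mem_polar_of_abs_le habs (fun t ht => ?_)
      exact inf_zero_add (abs_nonneg a) (abs_nonneg c) (abs_nonneg t)
        (polar_abs_disj ha ht) (polar_abs_disj hc ht)
  · intro S hS a ha
    rcases S.eq_empty_or_nonempty with rfl | ⟨s0, hs0⟩
    · have h0 : a ≤ 0 := ha.2 (by simp [upperBounds])
      have h2 : a ≤ a + a := ha.2 (by simp [upperBounds])
      have h3 : a = 0 := le_antisymm h0 (le_add_iff_nonneg_right a |>.mp h2)
      rw [h3]; exact zero_mem_polar _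
    · intro t ht
      rw [absl_eq, absl_eq]
      have hd : (0:R) ≤ |t| := abs_nonneg t
      have h1 : a⁺ ⊓ |t| = 0 := by
        have hub : ∀ s ∈ S, s ≤ a - a⁺ ⊓ |t| := by
          intro s hs
          rw [le_sub_comm]
          have h4 : a⁺ ≤ (a - s) + s⁺ := by
            refine sup_le ?_ (add_nonneg (sub_nonneg.mpr (ha.1 hs)) (posPart_nonneg s))
            calc a = (a - s) + s := by abel
            _ ≤ (a - s) + s⁺ := add_le_add_right (le_posPart s) _
          have h5 : s⁺ ⊓ |t| = 0 :=
            inf_zero_mono (posPart_nonneg s)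
              (sup_le (le_abs_self s) (abs_nonneg s)) hd (polar_abs_disj (hS hs) ht)
          calc a⁺ ⊓ |t| ≤ ((a - s) + s⁺) ⊓ |t| := inf_le_inf_right _ h4
          _ ≤ (a - s) ⊓ |t| + s⁺ ⊓ |t| :=
            inf_add_le_of_nonneg (sub_nonneg.mpr (ha.1 hs)) (posPart_nonneg s) hd
          _ = (a - s) ⊓ |t| := by rw [h5, add_zero]
          _ ≤ a - s := inf_le_left
        have h6 : a ≤ a - a⁺ ⊓ |t| := ha.2 hub
        have h7 : a⁺ ⊓ |t| ≤ 0 := by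
          have := sub_le_sub_left h6 a
          simpa using this
        exact le_antisymm h7 (le_inf (posPart_nonneg a) hd)
      have h2 : a⁻ ⊓ |t| = 0 := by
        have hneg : a⁻ ≤ |s0| := by
          refine sup_le ?_ (abs_nonneg s0)
          exact le_trans (neg_le_neg' (ha.1 hs0)) (neg_le_abs s0)
        exact inf_zero_mono (negPart_nonneg a) hneg hd (polar_abs_disj (hS hs0) ht)
      rw [← posPart_add_negPart a]
      exact inf_zero_add (posPart_nonneg a) (negPart_nonneg a) hd h1 h2

end Freud

namespace Freud

set_option linter.unusedSectionVars false

variable {R : Type*} [Lattice R] [AddCommGroup R] [Module ℝ R]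
  [CovariantClass R R (· + ·) (· ≤ ·)] [PosSMulMono ℝ R]

lemma self_mem_pB (x : R) : x ∈ principalBand x :=
  fun _ hI => hI.2

lemma pB_subset {x : R} {I : Set R} (hI : IsBand I) (hx : x ∈ I) :
    principalBand x ⊆ I := fun _ hz => hz I ⟨hI, hx⟩

lemma zero_mem_pB (x : R) : (0 : R) ∈ principalBand x :=
  fun _ hI => hI.1.ideal.zero_mem

lemma pB_add {x a b : R} (ha : a ∈ principalBand x) (hb : b ∈ principalBand x) :
    a + b ∈ principalBand x := fun I hI => hI.1.ideal.add_mem (ha I hI) (hb I hI)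

lemma pB_smul {x a : R} (c : ℝ) (ha : a ∈ principalBand x) :
    c • a ∈ principalBand x := fun I hI => hI.1.ideal.smul_mem c (ha I hI)

lemma pB_sub {x a b : R} (ha : a ∈ principalBand x) (hb : b ∈ principalBand x) :
    a - b ∈ principalBand x := by
  have := pB_add ha (pB_smul (-1 : ℝ) hb)
  rwa [neg_one_smul, ← sub_eq_add_neg] at this

lemma pB_mono {x y : R} (hy : 0 ≤ y) (hyx : y ≤ x) :
    principalBand y ⊆ principalBand x := fun z hz I hI =>
  hz I ⟨hI.1, hI.1.ideal.convex hI.1.ideal.zero_mem hI.2 hy hyx⟩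

lemma isBand_zeroSet : IsBand ({0} : Set R) := by
  constructor
  · constructor
    · rfl
    · intro a b ha hb
      rw [Set.mem_singleton_iff] at *; rw [ha, hb, add_zero]
    · intro c a ha
      rw [Set.mem_singleton_iff] at *; rw [ha, smul_zero]
    · intro a b ha hb
      rw [Set.mem_singleton_iff] at *; rw [ha, hb, sup_idem]
    · intro a b ha hb
      rw [Set.mem_singleton_iff] at *; rw [ha, hb, inf_idem]
    · intro a b c ha hc hab hbc
      rw [Set.mem_singleton_iff] at *
      rw [ha] at hab; rw [hc] at hbc
      exact le_antisymm hbc hab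
  · intro S hS a ha
    rcases S.eq_empty_or_nonempty with rfl | ⟨s0, hs0⟩
    · have h0 : a ≤ 0 := ha.2 (by simp [upperBounds])
      have h2 : a ≤ a + a := ha.2 (by simp [upperBounds])
      exact le_antisymm h0 (le_add_iff_nonneg_right a |>.mp h2)
    · have hs : s0 = 0 := hS hs0
      have h1 : (0 : R) ≤ a := hs ▸ ha.1 hs0
      have h2 : a ≤ 0 := ha.2 (fun s hs' => le_of_eq (hS hs'))
      exact le_antisymm h2 h1

lemma pB_zero_subset : principalBand (0 : R) ⊆ {0} :=
  pB_subset isBand_zeroSet rfl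

lemma mem_polar_pB {x y : R} (h : |y| ⊓ |x| = 0) : y ∈ polar (principalBand x) := by
  intro t ht
  rw [absl_eq, absl_eq]
  have hx : x ∈ polar {y} := by
    intro s hs
    rw [Set.mem_singleton_iff] at hs; subst hs
    rw [absl_eq, absl_eq, inf_comm]; exact h
  have ht' : t ∈ polar {y} := pB_subset (isBand_polar {y}) hx ht
  have := ht' y rfl
  rw [absl_eq, absl_eq] at this
  rw [inf_comm]; exact this

lemma polar_antitone {T T' : Set R} (h : T ⊆ T') : polar T' ⊆ polar T :=
  fun _ hz t ht => hz t (h ht)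

lemma polar_disj {x a b : R} (ha : a ∈ principalBand x) (hb : b ∈ polar (principalBand x)) :
    |b| ⊓ |a| = 0 := polar_abs_disj hb ha

lemma abs_eq_zero' {a : R} (h : |a| = 0) : a = 0 := by
  have h1 : a ≤ 0 := h ▸ le_abs_self a
  have h2 : -a ≤ 0 := h ▸ neg_le_abs a
  exact le_antisymm h1 (by rwa [neg_nonpos] at h2)

lemma decomp_unique {x a b a' b' : R} (ha : a ∈ principalBand x)
    (hb : b ∈ polar (principalBand x)) (ha' : a' ∈ principalBand x)
    (hb' : b' ∈ polar (principalBand x)) (h : a + b = a' + b') : a = a' := by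
  have hz : a - a' ∈ principalBand x := pB_sub ha ha'
  have hz' : b' - b ∈ polar (principalBand x) := by
    have := (isBand_polar (principalBand x)).ideal.add_mem hb'
      ((isBand_polar (principalBand x)).ideal.smul_mem (-1 : ℝ) hb)
    rwa [neg_one_smul, ← sub_eq_add_neg] at this
  have he : a - a' = b' - b := by
    rw [sub_eq_sub_iff_add_eq_add, h]
    exact add_comm a' b'
  have h0 : absl (b' - b) ⊓ absl (a - a') = 0 := hz' (a - a') hz
  rw [← he, absl_eq, inf_idem] at h0
  exact sub_eq_zero.mp (abs_eq_zero' h0)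

section Proj
variable (hpp : ∀ x : R, IsProjectionBand (principalBand x))

noncomputable def proj (x v : R) : R := (hpp x v).choose

lemma proj_mem (x v : R) : proj hpp x v ∈ principalBand x := (hpp x v).choose_spec.1

lemma proj_compl_mem (x v : R) : v - proj hpp x v ∈ polar (principalBand x) := by
  obtain ⟨hm, b, hb, heq⟩ := (hpp x v).choose_spec
  have h2 : v - proj hpp x v = b := (eq_sub_of_add_eq' heq.symm).symm
  rwa [h2]

lemma proj_eq_of {x v a : R} (ha : a ∈ principalBand x)
    (hb : v - a ∈ polar (principalBand x)) : proj hpp x v = a := by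
  refine decomp_unique (proj_mem hpp x v) (proj_compl_mem hpp x v) ha hb ?_
  abel

lemma proj_of_mem {x v : R} (hv : v ∈ principalBand x) : proj hpp x v = v :=
  proj_eq_of hpp hv (by rw [sub_self]; exact zero_mem_polar _)

lemma proj_of_polar {x v : R} (hv : v ∈ polar (principalBand x)) : proj hpp x v = 0 :=
  proj_eq_of hpp (zero_mem_pB x) (by rwa [sub_zero])

lemma proj_add (x v w : R) :
    proj hpp x (v + w) = proj hpp x v + proj hpp x w := by
  refine proj_eq_of hpp (pB_add (proj_mem hpp x v) (proj_mem hpp x w)) ?_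
  have h2 : v + w - (proj hpp x v + proj hpp x w)
      = (v - proj hpp x v) + (w - proj hpp x w) := by abel
  rw [h2]
  exact (isBand_polar _).ideal.add_mem (proj_compl_mem hpp x v) (proj_compl_mem hpp x w)

lemma proj_smul (x : R) (c : ℝ) (v : R) :
    proj hpp x (c • v) = c • proj hpp x v := by
  refine proj_eq_of hpp (pB_smul c (proj_mem hpp x v)) ?_
  rw [← smul_sub]
  exact (isBand_polar _).ideal.smul_mem c (proj_compl_mem hpp x v)

lemma proj_sub (x v w : R) :
    proj hpp x (v - w) = proj hpp x v - proj hpp x w := by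
  have h := proj_add hpp x (v - w) w
  rw [sub_add_cancel] at h
  rw [eq_sub_iff_add_eq, ← h]

lemma proj_nonneg {x v : R} (hv : 0 ≤ v) : 0 ≤ proj hpp x v := by
  set a := proj hpp x v with hadef
  have hdisj : |v - a| ⊓ |a| = 0 := polar_disj (proj_mem hpp x v) (proj_compl_mem hpp x v)
  have h1 : a⁻ ≤ |v - a| := by
    refine sup_le ?_ (abs_nonneg _)
    have h0 : -a ≤ v - a := by
      have := sub_le_sub_right hv a
      simpa using this
    exact le_trans h0 (le_abs_self _)
  have h2 : a⁻ ≤ |a| := sup_le (neg_le_abs a) (abs_nonneg a)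
  have h3 : a⁻ ≤ 0 := hdisj ▸ le_inf h1 h2
  exact negPart_eq_zero.mp (le_antisymm h3 (negPart_nonneg a))

lemma proj_le_self {x v : R} (hv : 0 ≤ v) : proj hpp x v ≤ v := by
  set a := proj hpp x v with hadef
  have hdisj : |v - a| ⊓ |a| = 0 := polar_disj (proj_mem hpp x v) (proj_compl_mem hpp x v)
  have h1 : (v - a)⁻ ≤ |v - a| := sup_le (neg_le_abs _) (abs_nonneg _)
  have h2 : (v - a)⁻ ≤ |a| := by
    refine sup_le ?_ (abs_nonneg _)
    have h0 : -(v - a) ≤ a := by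
      rw [neg_sub]
      have := sub_le_sub_left hv a
      simpa using this
    exact le_trans h0 (le_abs_self a)
  have h3 : (v - a)⁻ = 0 :=
    le_antisymm (hdisj ▸ le_inf h1 h2) (negPart_nonneg _)
  exact sub_nonneg.mp (negPart_eq_zero.mp h3)

lemma proj_mono {x v w : R} (h : v ≤ w) : proj hpp x v ≤ proj hpp x w := by
  set a := proj hpp x v with hadef
  set a' := proj hpp x w with hadef'
  have hB : a - a' ∈ principalBand x := pB_sub (proj_mem hpp x v) (proj_mem hpp x w)
  have hP : (w - a') - (v - a) ∈ polar (principalBand x) := by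
    have := (isBand_polar (principalBand x)).ideal.add_mem (proj_compl_mem hpp x w)
      ((isBand_polar (principalBand x)).ideal.smul_mem (-1 : ℝ) (proj_compl_mem hpp x v))
    rwa [neg_one_smul, ← sub_eq_add_neg] at this
  have hdisj : |(w - a') - (v - a)| ⊓ |a - a'| = 0 := polar_disj hB hP
  have h1 : a - a' ≤ (w - a') - (v - a) := by
    rw [← sub_nonpos]
    have he : a - a' - ((w - a') - (v - a)) = v - w := by abel
    rw [he]; exact sub_nonpos.mpr h
  have h2 : (a - a')⁺ ≤ |(w - a') - (v - a)| :=
    le_trans (posPart_mono h1) (sup_le (le_abs_self _) (abs_nonneg _))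
  have h3 : (a - a')⁺ ≤ |a - a'| := sup_le (le_abs_self _) (abs_nonneg _)
  have h4 : (a - a')⁺ = 0 := le_antisymm (hdisj ▸ le_inf h2 h3) (posPart_nonneg _)
  exact sub_nonpos.mp (posPart_eq_zero.mp h4)

lemma proj_proj {x y : R} (hsub : principalBand y ⊆ principalBand x) (v : R) :
    proj hpp y (proj hpp x v) = proj hpp y v := by
  have h0 : proj hpp y (v - proj hpp x v) = 0 :=
    proj_of_polar hpp (polar_antitone hsub (proj_compl_mem hpp x v))
  have h1 := proj_sub hpp y v (proj hpp x v)
  rw [h0] at h1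
  exact (sub_eq_zero.mp h1.symm).symm

lemma proj_posPart (z : R) : proj hpp (z⁺) z = z⁺ := by
  refine proj_eq_of hpp (self_mem_pB _) ?_
  have h : z - z⁺ = -(z⁻) := by
    have hps := posPart_sub_negPart z
    set p := z⁺ with hp
    set n := z⁻ with hn
    rw [← hps]; abel
  rw [h]
  refine mem_polar_pB ?_
  rw [abs_neg, abs_of_nonneg (negPart_nonneg z), abs_of_nonneg (posPart_nonneg z)]
  rw [inf_comm]
  exact posPart_inf_negPart_eq_zero z

lemma isComponent_proj (x : R) {u : R} (hu0 : 0 ≤ u) :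
    IsComponent u (proj hpp x u) := by
  set e := proj hpp x u with hedef
  have he0 : 0 ≤ e := proj_nonneg hpp hu0
  have hf0 : 0 ≤ u - e := sub_nonneg.mpr (proj_le_self hpp hu0)
  have hdisj : |u - e| ⊓ |e| = 0 := polar_disj (proj_mem hpp x u) (proj_compl_mem hpp x u)
  rw [abs_of_nonneg hf0, abs_of_nonneg he0] at hdisj
  have h2 : e ⊓ (u - e) = 0 := by rw [inf_comm]; exact hdisj
  refine ⟨h2, ?_⟩
  have h3 := inf_add_sup e (u - e)
  rw [h2, zero_add] at h3
  rw [h3]; abel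

end Proj

lemma isComponent_sub {u a b : R} (ha : IsComponent u a) (hb : IsComponent u b)
    (hab : a ≤ b) : IsComponent u (b - a) := by
  have ha0 : 0 ≤ a := by rw [← ha.1]; exact inf_le_left
  have hua : 0 ≤ u - a := by rw [← ha.1]; exact inf_le_right
  have hb0 : 0 ≤ b := by rw [← hb.1]; exact inf_le_left
  have hub : 0 ≤ u - b := by rw [← hb.1]; exact inf_le_right
  have hba : 0 ≤ b - a := sub_nonneg.mpr hab
  have hrw : u - (b - a) = (u - b) + a := by abel
  have hinf : (b - a) ⊓ (u - (b - a)) = 0 := by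
    rw [hrw]
    refine le_antisymm ?_ (le_inf hba (add_nonneg hub ha0))
    rw [inf_comm]
    calc ((u - b) + a) ⊓ (b - a)
        ≤ (u - b) ⊓ (b - a) + a ⊓ (b - a) := inf_add_le_of_nonneg hub ha0 hba
    _ ≤ (u - b) ⊓ b + a ⊓ (u - a) := by
        refine add_le_add (inf_le_inf_left _ ?_) (inf_le_inf_left _ ?_)
        · calc b - a ≤ b - 0 := sub_le_sub_left ha0 b
          _ = b := sub_zero b
        · exact sub_le_sub_right (sub_nonneg.mp hub) a
    _ = 0 := by rw [inf_comm (u - b) b, hb.1, ha.1, add_zero]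
  refine ⟨hinf, ?_⟩
  have h3 := inf_add_sup (b - a) (u - (b - a))
  rw [hinf, zero_add] at h3
  rw [h3]; abel

lemma isComponent_self {u : R} (hu0 : 0 ≤ u) : IsComponent u u :=
  ⟨by rw [sub_self]; exact inf_eq_right.mpr hu0,
   by rw [sub_self]; exact sup_eq_left.mpr hu0⟩

lemma absl_of_nonneg {a : R} (h : 0 ≤ a) : absl a = a := by
  rw [absl_eq, abs_of_nonneg h]

end Freud

namespace Freud

set_option linter.unusedSectionVars false
set_option maxHeartbeats 1000000

variable {R : Type*} [Lattice R] [AddCommGroup R] [Module ℝ R]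
  [CovariantClass R R (· + ·) (· ≤ ·)] [PosSMulMono ℝ R]

lemma sum_nonneg' {ι : Type*} {f : ι → R} {s : Finset ι} (h : ∀ j ∈ s, 0 ≤ f j) :
    0 ≤ ∑ j ∈ s, f j := by
  haveI : IsOrderedAddMonoid R :=
    { add_le_add_left := fun a b hab c => add_le_add_left hab c }
  exact Finset.sum_nonneg h

lemma sum_le_sum' {ι : Type*} {f g : ι → R} {s : Finset ι} (h : ∀ j ∈ s, f j ≤ g j) :
    ∑ j ∈ s, f j ≤ ∑ j ∈ s, g j := by
  haveI : IsOrderedAddMonoid R :=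
    { add_le_add_left := fun a b hab c => add_le_add_left hab c }
  exact Finset.sum_le_sum h

lemma main_approx {u : R} (hu0 : 0 ≤ u)
    (hpp : ∀ x : R, IsProjectionBand (principalBand x))
    {w : R} {M : ℝ} (hw0 : 0 ≤ w) (hwM : w ≤ M • u)
    {ε : ℝ} (hε : 0 < ε) :
    ∃ (k : ℕ) (χ : Fin k → R) (lam : Fin k → ℝ),
      (∀ i, IsComponent u (χ i)) ∧ 0 ≤ w - ∑ i, lam i • χ i ∧
        w - ∑ i, lam i • χ i ≤ ε • u := by
  obtain ⟨k, hk'⟩ := exists_nat_ge (M / ε)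
  have hk : M ≤ (k : ℝ) * ε := (div_le_iff₀ hε).mp hk'
  set t : ℕ → ℝ := fun j => (j : ℝ) * ε with ht
  set xx : ℕ → R := fun j => (w - t j • u)⁺ with hxx
  set e : ℕ → R := fun j => proj hpp (xx j) u with he
  set p : ℕ → R := fun j => proj hpp (xx j) w with hp
  have hxx0 : ∀ j, 0 ≤ xx j := fun j => posPart_nonneg _
  have hxxmono : ∀ j, xx (j + 1) ≤ xx j := by
    intro j
    refine posPart_mono (sub_le_sub_left ?_ w)
    refine smul_le_smul_c ?_ hu0
    have : (j : ℝ) ≤ (j : ℝ) + 1 := by linarith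
    simp only [ht]
    push_cast
    nlinarith [hε.le]
  have hBsub : ∀ j, principalBand (xx (j + 1)) ⊆ principalBand (xx j) :=
    fun j => pB_mono (hxx0 _) (hxxmono j)
  have he0 : ∀ j, 0 ≤ e j := fun _ => proj_nonneg hpp hu0
  have heu : ∀ j, e j ≤ u := fun _ => proj_le_self hpp hu0
  have hcomp : ∀ j, IsComponent u (e j) := fun j => isComponent_proj hpp (xx j) hu0
  have hF3 : ∀ j, p j - t j • e j = xx j := by
    intro j
    have h1 : proj hpp (xx j) (w - t j • u) = xx j := proj_posPart hpp (w - t j • u)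
    rw [← h1, proj_sub, proj_smul]
  have hemono : ∀ j, e (j + 1) ≤ e j := by
    intro j
    have h1 : proj hpp (xx j) (e (j + 1)) = e (j + 1) :=
      proj_of_mem hpp (hBsub j (proj_mem hpp (xx (j + 1)) u))
    calc e (j + 1) = proj hpp (xx j) (e (j + 1)) := h1.symm
    _ ≤ proj hpp (xx j) u := proj_mono hpp (heu (j + 1))
    _ = e j := rfl
  have hlow : ∀ j, t j • (e j - e (j + 1)) ≤ p j - p (j + 1) := by
    intro j
    have h1 : proj hpp (xx (j + 1)) (xx j) ≤ xx j := proj_le_self hpp (hxx0 j)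
    have h2 : proj hpp (xx (j + 1)) (xx j) = p (j + 1) - t j • e (j + 1) := by
      rw [← hF3 j, proj_sub, proj_smul, proj_proj hpp (hBsub j), proj_proj hpp (hBsub j)]
    rw [h2, ← hF3 j] at h1
    rw [← sub_nonneg] at h1 ⊢
    have heq : p j - p (j + 1) - t j • (e j - e (j + 1))
        = (p j - t j • e j) - (p (j + 1) - t j • e (j + 1)) := by
      rw [smul_sub]; abel
    rw [heq]; exact h1
  have hupp : ∀ j, p j - p (j + 1) ≤ t (j + 1) • (e j - e (j + 1)) := by
    intro j
    have h0 : w - t (j + 1) • u ≤ xx (j + 1) := le_posPart _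
    have h1 : proj hpp (xx j) (w - t (j + 1) • u) ≤ proj hpp (xx j) (xx (j + 1)) :=
      proj_mono hpp h0
    have h2 : proj hpp (xx j) (w - t (j + 1) • u) = p j - t (j + 1) • e j := by
      rw [proj_sub, proj_smul]
    have h3 : proj hpp (xx j) (xx (j + 1)) = xx (j + 1) :=
      proj_of_mem hpp (hBsub j (self_mem_pB _))
    rw [h2, h3, ← hF3 (j + 1)] at h1
    rw [← sub_nonneg] at h1 ⊢
    have heq : t (j + 1) • (e j - e (j + 1)) - (p j - p (j + 1))
        = (p (j + 1) - t (j + 1) • e (j + 1)) - (p j - t (j + 1) • e j) := by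
      rw [smul_sub]; abel
    rw [heq]; exact h1
  have hp0 : p 0 = w := by
    have hxx0eq : xx 0 = w := by
      show (w - t 0 • u)⁺ = w
      have ht0 : t 0 = 0 := by simp [ht]
      rw [ht0, zero_smul, sub_zero]
      exact posPart_eq_self.mpr hw0
    show proj hpp (xx 0) w = w
    rw [hxx0eq]
    exact proj_of_mem hpp (self_mem_pB w)
  have hpk : p k = 0 := by
    have hxxk : xx k = 0 := by
      show (w - t k • u)⁺ = 0
      refine posPart_eq_zero.mpr (sub_nonpos.mpr ?_)
      calc w ≤ M • u := hwM
      _ ≤ t k • u := smul_le_smul_c hk hu0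
    show proj hpp (xx k) w = 0
    rw [hxxk]
    exact pB_zero_subset (proj_mem hpp 0 w)
  have hsumeq : (∑ i : Fin k, t (i : ℕ) • (e (i : ℕ) - e ((i : ℕ) + 1)))
      = ∑ j ∈ Finset.range k, t j • (e j - e (j + 1)) :=
    (Finset.sum_range (fun j => t j • (e j - e (j + 1)))).symm
  have hsum1 : ∑ j ∈ Finset.range k, (p j - p (j + 1)) = w := by
    rw [Finset.sum_range_sub' p, hp0, hpk, sub_zero]
  have hws : w - ∑ j ∈ Finset.range k, t j • (e j - e (j + 1))
      = ∑ j ∈ Finset.range k, ((p j - p (j + 1)) - t j • (e j - e (j + 1))) := by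
    rw [Finset.sum_sub_distrib, hsum1]
  refine ⟨k, fun i => e (i : ℕ) - e ((i : ℕ) + 1), fun i => t (i : ℕ), ?_, ?_, ?_⟩
  · intro i
    exact isComponent_sub (hcomp ((i : ℕ) + 1)) (hcomp (i : ℕ)) (hemono (i : ℕ))
  · rw [hsumeq, hws]
    refine sum_nonneg' fun j _ => ?_
    rw [sub_nonneg]; exact hlow j
  · rw [hsumeq, hws]
    calc ∑ j ∈ Finset.range k, ((p j - p (j + 1)) - t j • (e j - e (j + 1)))
        ≤ ∑ j ∈ Finset.range k, ε • (e j - e (j + 1)) := by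
          refine sum_le_sum' fun j _ => ?_
          have hstep : t (j + 1) - t j = ε := by simp only [ht]; push_cast; ring
          calc (p j - p (j + 1)) - t j • (e j - e (j + 1))
              ≤ t (j + 1) • (e j - e (j + 1)) - t j • (e j - e (j + 1)) :=
                sub_le_sub_right (hupp j) _
          _ = (t (j + 1) - t j) • (e j - e (j + 1)) := (sub_smul _ _ _).symm
          _ = ε • (e j - e (j + 1)) := by rw [hstep]
    _ = ε • ∑ j ∈ Finset.range k, (e j - e (j + 1)) := (Finset.smul_sum).symm
    _ = ε • (e 0 - e k) := by rw [Finset.sum_range_sub' e]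
    _ ≤ ε • u := by
          refine smul_le_smul_of_nonneg_left ?_ hε.le
          exact le_trans (sub_le_self _ (he0 k)) (heu 0)

end Freud

/-- **Freudenthal's Spectral Theorem.** In a Riesz space with strong unit `u` and the
principal projection property, every element is approximated, uniformly in the
`u`-norm, by real linear combinations of components of `u`. -/
theorem statement2 {R : Type*} [Lattice R] [AddCommGroup R] [Module ℝ R]
    [CovariantClass R R (· + ·) (· ≤ ·)] [PosSMulMono ℝ R]
    (u : R) (hu0 : 0 ≤ u) (hu : ∀ v : R, ∃ n : ℕ, 1 ≤ n ∧ v ≤ n • u)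
    (hpp : ∀ x : R, IsProjectionBand (principalBand x)) (v : R) :
    (∀ ε : ℝ, 0 < ε → ∃ (k : ℕ) (χ : Fin k → R) (lam : Fin k → ℝ),
        (∀ i, IsComponent u (χ i)) ∧ absl (v - ∑ i, lam i • χ i) ≤ ε • u) ∧
    (∃ c : ℕ → R,
        (∀ n, ∃ (k : ℕ) (χ : Fin k → R) (lam : Fin k → ℝ),
          (∀ i, IsComponent u (χ i)) ∧ c n = ∑ i, lam i • χ i) ∧
        ∀ ε : ℝ, 0 < ε → ∃ N : ℕ, ∀ n ≥ N, absl (v - c n) ≤ ε • u) := by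
  classical
  have key : ∀ ε : ℝ, 0 < ε → ∃ s : R,
      (∃ (k : ℕ) (χ : Fin k → R) (lam : Fin k → ℝ),
        (∀ i, IsComponent u (χ i)) ∧ s = ∑ i, lam i • χ i) ∧ absl (v - s) ≤ ε • u := by
    intro ε hε
    obtain ⟨n, hn1, hvn⟩ := hu v
    obtain ⟨m, hm1, hvm⟩ := hu (-v)
    set w : R := v + (m : ℝ) • u with hwdef
    have hmsmul : (m : ℝ) • u = m • u := Nat.cast_smul_eq_nsmul ℝ m u
    have hw0 : 0 ≤ w := by
      rw [hwdef, hmsmul]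
      have h3 := add_le_add_left hvm v
      calc (0:R) = -v + v := by abel
      _ ≤ m • u + v := h3
      _ = v + m • u := by abel
    have hwM : w ≤ ((n + m : ℕ) : ℝ) • u := by
      rw [hwdef, hmsmul, Nat.cast_smul_eq_nsmul ℝ (n + m) u, add_nsmul]
      exact add_le_add_left hvn _
    obtain ⟨k, χ0, lam0, hχ0, h1, h2⟩ :=
      Freud.main_approx hu0 hpp hw0 hwM hε
    set s0 : R := ∑ i, lam0 i • χ0 i with hs0def
    refine ⟨s0 - (m : ℝ) • u, ⟨k + 1, Fin.snoc χ0 u, Fin.snoc lam0 (-(m : ℝ)), ?_, ?_⟩, ?_⟩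
    · refine Fin.lastCases ?_ ?_
      · rw [Fin.snoc_last]
        exact Freud.isComponent_self hu0
      · intro i
        rw [Fin.snoc_castSucc]
        exact hχ0 i
    · rw [Fin.sum_univ_castSucc]
      simp only [Fin.snoc_castSucc, Fin.snoc_last]
      rw [neg_smul, ← sub_eq_add_neg, hs0def]
    · have hvs : v - (s0 - (m : ℝ) • u) = w - s0 := by
        rw [hwdef]; abel
      rw [hvs, Freud.absl_of_nonneg h1]
      exact h2
  constructor
  · intro ε hε
    obtain ⟨s, ⟨k, χ, lam, hχ, hs⟩, hb⟩ := key ε hε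
    exact ⟨k, χ, lam, hχ, by rwa [← hs]⟩
  · choose f h1 h2 using fun n : ℕ => key (1 / ((n : ℝ) + 1)) (by positivity)
    refine ⟨f, h1, ?_⟩
    intro ε hε
    obtain ⟨N, hN⟩ := exists_nat_gt (1 / ε)
    refine ⟨N, fun n hn => le_trans (h2 n) (Freud.smul_le_smul_c ?_ hu0)⟩
    have hn' : (N : ℝ) ≤ (n : ℝ) := Nat.cast_le.mpr hn
    rw [div_le_iff₀ (by positivity)]
    rw [div_lt_iff₀ hε] at hN
    nlinarith [hε.le]
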